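/- Let (X, L) be a combinatorial k-net of order d with k ≤ √d. If S ⊆ X is a subset of size d whose indicator function X → ℝ lies in the real linear span of the indicator functions of the lines of L, then S is a line of L. -/

import Mathlib

theorem knet_rigidity_combinatorial
    (d k : ℕ) (X : Type) [Fintype X] [DecidableEq X]
    (hX : Fintype.card X = d ^ 2)
    (hk : (k : ℝ) ≤ Real.sqrt d)
    (L : Finset (Finset X))
    (c : Finset X → Fin k)
    (hsize : ∀ ℓ ∈ L, ℓ.card = d)
    (hsurj : ∀ i : Fin k, ∃ ℓ ∈ L, c ℓ = i)
    (hclass : ∀ i : Fin k, ∀ x : X, ∃! ℓ, ℓ ∈ L ∧ c ℓ = i ∧ x ∈ ℓ)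
    (hmeet : ∀ ℓ ∈ L, ∀ ℓ' ∈ L, c ℓ ≠ c ℓ' → (ℓ ∩ ℓ').card = 1)
    (S : Finset X) (hS : S.card = d)
    (hspan : (fun x => if x ∈ S then (1 : ℝ) else 0) ∈
      Submodule.span ℝ
        ((fun ℓ : Finset X => (fun x => if x ∈ ℓ then (1 : ℝ) else 0)) '' (L : Set (Finset X)))) :
    S ∈ L := by
  classical
  -- basic numeric facts
  have hk1 : 1 ≤ k := by have := (c ∅).2; omega
  have hkk : k * k ≤ d := by
    have h0 : (0:ℝ) ≤ (d:ℝ) := by positivity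
    have h1 : ((k*k : ℕ) : ℝ) ≤ (d : ℝ) := by
      push_cast
      nlinarith [Real.sq_sqrt h0, Real.sqrt_nonneg (d:ℝ), hk]
    exact_mod_cast h1
  have hd1 : 1 ≤ d := le_trans (by nlinarith [Nat.mul_le_mul hk1 hk1]) hkk
  -- uniqueness of the line of a given class through a given point
  have huniq : ∀ ℓ ∈ L, ∀ m ∈ L, c ℓ = c m → ∀ x : X, x ∈ ℓ → x ∈ m → ℓ = m := by
    intro ℓ hℓ m hm hc x hxℓ hxm
    obtain ⟨n, -, hu⟩ := hclass (c ℓ) x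
    rw [hu ℓ ⟨hℓ, rfl, hxℓ⟩, hu m ⟨hm, hc.symm, hxm⟩]
  -- extract coefficients
  obtain ⟨a, haL, hsum⟩ := (Finsupp.mem_span_image_iff_linearCombination ℝ).mp hspan
  have hsupp : a.support ⊆ L := Finset.coe_subset.mp (Finsupp.mem_supported ℝ a |>.mp haL)
  have hsum' : ∑ ℓ ∈ L, (a ℓ) • (fun x => if x ∈ ℓ then (1:ℝ) else 0)
      = (fun x => if x ∈ S then (1:ℝ) else 0) := by
    rw [← hsum, Finsupp.linearCombination_apply, Finsupp.sum]
    exact (Finset.sum_subset hsupp (fun ℓ _ hz => by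
      rw [Finsupp.notMem_support_iff.mp hz, zero_smul])).symm
  have key : ∀ x : X, (if x ∈ S then (1:ℝ) else 0)
      = ∑ ℓ ∈ L, a ℓ * (if x ∈ ℓ then 1 else 0) := by
    intro x
    have h := congrFun hsum' x
    simp only [Finset.sum_apply, Pi.smul_apply, smul_eq_mul] at h
    exact h.symm
  have hind : ∀ (T W : Finset X), ∑ x ∈ T, (if x ∈ W then (1:ℝ) else 0) = ((T ∩ W).card : ℝ) := by
    intro T W
    rw [Finset.sum_boole, Finset.filter_mem_eq_inter]
  have hsumEq : ∀ T : Finset X, ((T ∩ S).card : ℝ) = ∑ ℓ ∈ L, a ℓ * ((T ∩ ℓ).card : ℝ) := by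
    intro T
    rw [← hind T S]
    calc ∑ x ∈ T, (if x ∈ S then (1:ℝ) else 0)
        = ∑ x ∈ T, ∑ ℓ ∈ L, a ℓ * (if x ∈ ℓ then 1 else 0) :=
          Finset.sum_congr rfl (fun x _ => key x)
      _ = ∑ ℓ ∈ L, ∑ x ∈ T, a ℓ * (if x ∈ ℓ then 1 else 0) := Finset.sum_comm
      _ = ∑ ℓ ∈ L, a ℓ * ((T ∩ ℓ).card : ℝ) := by
          refine Finset.sum_congr rfl (fun ℓ _ => ?_)
          rw [← Finset.mul_sum, hind T ℓ]
  have hA : ∑ ℓ ∈ L, a ℓ = 1 := by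
    have h := hsumEq Finset.univ
    simp only [Finset.univ_inter, hS] at h
    rw [Finset.sum_congr rfl (fun ℓ hℓ => by rw [hsize ℓ hℓ] :
      ∀ ℓ ∈ L, a ℓ * ((ℓ.card : ℕ) : ℝ) = a ℓ * d), ← Finset.sum_mul] at h
    have hd' : (d:ℝ) ≠ 0 := by positivity
    field_simp at h
    linarith
  set A : Fin k → ℝ := fun i => ∑ ℓ ∈ L.filter (fun m => c m = i), a ℓ with hAdef
  have hAsum : ∑ i : Fin k, A i = 1 := by
    rw [← hA]
    exact Finset.sum_fiberwise_of_maps_to (fun ℓ _ => Finset.mem_univ (c ℓ)) a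
  -- coefficient formula
  have hcoef : ∀ ℓ' ∈ L, ((S ∩ ℓ').card : ℝ) = a ℓ' * d + (1 - A (c ℓ')) := by
    intro ℓ' hℓ'
    have h := hsumEq ℓ'
    rw [Finset.inter_comm] at h
    rw [← Finset.sum_filter_add_sum_filter_not L (fun m => c m = c ℓ')] at h
    have hsame : ∑ ℓ ∈ L.filter (fun m => c m = c ℓ'), a ℓ * ((ℓ' ∩ ℓ).card : ℝ) = a ℓ' * d := by
      rw [Finset.sum_eq_single ℓ']
      · rw [Finset.inter_self, hsize ℓ' hℓ']
      · intro m hm hne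
        rw [Finset.mem_filter] at hm
        have he : (ℓ' ∩ m) = ∅ := by
          by_contra hne2
          obtain ⟨x, hx⟩ := Finset.nonempty_iff_ne_empty.mpr hne2
          rw [Finset.mem_inter] at hx
          exact hne (huniq m hm.1 ℓ' hℓ' hm.2 x hx.2 hx.1)
        rw [he]
        simp
      · intro h2
        rw [Finset.mem_filter] at h2
        exact absurd ⟨hℓ', rfl⟩ h2
    have hdiff : ∑ ℓ ∈ L.filter (fun m => ¬ c m = c ℓ'), a ℓ * ((ℓ' ∩ ℓ).card : ℝ)
        = 1 - A (c ℓ') := by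
      have h1 : ∀ ℓ ∈ L.filter (fun m => ¬ c m = c ℓ'), a ℓ * ((ℓ' ∩ ℓ).card : ℝ) = a ℓ := by
        intro ℓ hℓ
        rw [Finset.mem_filter] at hℓ
        rw [Finset.inter_comm, hmeet ℓ hℓ.1 ℓ' hℓ' hℓ.2]
        simp
      rw [Finset.sum_congr rfl h1]
      have h2 := Finset.sum_filter_add_sum_filter_not L (fun m => c m = c ℓ') a
      rw [hA] at h2
      have h3 : A (c ℓ') = ∑ ℓ ∈ L.filter (fun m => c m = c ℓ'), a ℓ := rfl
      linarith
    rw [hsame, hdiff] at h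
    exact h
  -- each parallel class partitions any set
  have hthrough : ∀ (i : Fin k) (x : X), (L.filter (fun m => c m = i ∧ x ∈ m)).card = 1 := by
    intro i x
    obtain ⟨ℓ, ⟨hℓ, hc, hx⟩, hu⟩ := hclass i x
    rw [Finset.card_eq_one]
    refine ⟨ℓ, Finset.eq_singleton_iff_unique_mem.mpr ⟨Finset.mem_filter.mpr ⟨hℓ, hc, hx⟩, ?_⟩⟩
    intro m hm
    rw [Finset.mem_filter] at hm
    exact hu m ⟨hm.1, hm.2.1, hm.2.2⟩
  have hclassSum : ∀ (i : Fin k) (T : Finset X),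
      ∑ ℓ ∈ L.filter (fun m => c m = i), (T ∩ ℓ).card = T.card := by
    intro i T
    calc ∑ ℓ ∈ L.filter (fun m => c m = i), (T ∩ ℓ).card
        = ∑ ℓ ∈ L.filter (fun m => c m = i), ∑ x ∈ T, (if x ∈ ℓ then 1 else 0) := by
          refine Finset.sum_congr rfl fun ℓ _ => ?_
          rw [Finset.sum_boole, Finset.filter_mem_eq_inter, Nat.cast_id]
      _ = ∑ x ∈ T, ∑ ℓ ∈ L.filter (fun m => c m = i), (if x ∈ ℓ then 1 else 0) :=
          Finset.sum_comm
      _ = ∑ x ∈ T, 1 := by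
          refine Finset.sum_congr rfl fun x _ => ?_
          rw [Finset.sum_boole, Finset.filter_filter, Nat.cast_id]
          exact hthrough i x
      _ = T.card := by simp
  -- the squares identity
  have hfib : ∑ ℓ ∈ L, (1 - A (c ℓ)) * ((S ∩ ℓ).card : ℝ) = ((k:ℝ) - 1) * d := by
    rw [← Finset.sum_fiberwise_of_maps_to (fun ℓ _ => Finset.mem_univ (c ℓ))
      (fun ℓ => (1 - A (c ℓ)) * ((S ∩ ℓ).card : ℝ))]
    have h1 : ∀ i : Fin k, ∑ ℓ ∈ L.filter (fun m => c m = i), (1 - A (c ℓ)) * ((S ∩ ℓ).card : ℝ)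
        = (1 - A i) * d := by
      intro i
      have h2 : ∀ ℓ ∈ L.filter (fun m => c m = i), (1 - A (c ℓ)) * ((S ∩ ℓ).card : ℝ)
          = (1 - A i) * ((S ∩ ℓ).card : ℝ) := by
        intro ℓ hℓ
        rw [(Finset.mem_filter.mp hℓ).2]
      rw [Finset.sum_congr rfl h2, ← Finset.mul_sum, ← Nat.cast_sum, hclassSum i S, hS]
    rw [Finset.sum_congr rfl (fun i _ => h1 i), ← Finset.sum_mul]
    congr 1
    rw [Finset.sum_sub_distrib, hAsum, Finset.sum_const, Finset.card_univ, Fintype.card_fin,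
      nsmul_eq_mul, mul_one]
  have hsqN : (∑ ℓ ∈ L, (S ∩ ℓ).card^2) + d = d^2 + k*d := by
    have hds : (d:ℝ) = ∑ ℓ ∈ L, a ℓ * ((S ∩ ℓ).card : ℝ) := by
      have h := hsumEq S
      rwa [Finset.inter_self, hS] at h
    have h3 : (d:ℝ)*(d:ℝ) = ∑ ℓ ∈ L, (a ℓ * d) * ((S ∩ ℓ).card : ℝ) := by
      rw [Finset.sum_congr rfl (fun ℓ _ => by ring :
        ∀ ℓ ∈ L, (a ℓ * d) * ((S ∩ ℓ).card:ℝ) = (a ℓ * ((S ∩ ℓ).card:ℝ)) * d),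
        ← Finset.sum_mul, ← hds]
    have h4 : ∀ ℓ ∈ L, (a ℓ * d) * ((S ∩ ℓ).card : ℝ)
        = ((S ∩ ℓ).card:ℝ)^2 - (1 - A (c ℓ)) * ((S ∩ ℓ).card : ℝ) := by
      intro ℓ hℓ
      have h5 := hcoef ℓ hℓ
      nlinarith [h5]
    rw [Finset.sum_congr rfl h4, Finset.sum_sub_distrib, hfib] at h3
    have h5 : ((∑ ℓ ∈ L, (S ∩ ℓ).card^2 : ℕ) : ℝ) + d = ((d^2 + k*d : ℕ) : ℝ) := by
      push_cast
      nlinarith [h3]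
    exact_mod_cast h5
  -- double counting: collinearity of pairs
  set n : X → X → ℕ := fun x y => (L.filter (fun m => x ∈ m ∧ y ∈ m)).card with hn
  have hdouble : ∑ ℓ ∈ L, (S ∩ ℓ).card^2 = ∑ x ∈ S, ∑ y ∈ S, n x y := by
    have h1 : ∀ ℓ : Finset X, (S ∩ ℓ).card ^ 2
        = ∑ x ∈ S, ∑ y ∈ S, (if x ∈ ℓ ∧ y ∈ ℓ then 1 else 0) := by
      intro ℓ
      have hcard : (S ∩ ℓ).card = ∑ x ∈ S, (if x ∈ ℓ then 1 else 0) := by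
        rw [Finset.sum_boole, Finset.filter_mem_eq_inter, Nat.cast_id]
      rw [pow_two, hcard, Finset.sum_mul_sum]
      refine Finset.sum_congr rfl fun x _ => Finset.sum_congr rfl fun y _ => ?_
      by_cases hx : x ∈ ℓ <;> by_cases hy : y ∈ ℓ <;> simp [hx, hy]
    rw [Finset.sum_congr rfl fun ℓ _ => h1 ℓ, Finset.sum_comm]
    refine Finset.sum_congr rfl fun x _ => ?_
    rw [Finset.sum_comm]
    refine Finset.sum_congr rfl fun y _ => ?_
    rw [Finset.sum_boole, Nat.cast_id]
  have hdiag : ∀ x : X, n x x = k := by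
    intro x
    have hfeq : L.filter (fun m => x ∈ m ∧ x ∈ m) = L.filter (fun m => x ∈ m) := by
      simp
    rw [hn]
    simp only [hfeq]
    rw [← Fintype.card_fin k, ← Finset.card_univ]
    refine Finset.card_bij (fun m _ => c m) (fun m _ => Finset.mem_univ _) ?_ ?_
    · intro m hm m' hm' hcc
      rw [Finset.mem_filter] at hm hm'
      exact huniq m hm.1 m' hm'.1 hcc x hm.2 hm'.2
    · intro i _
      obtain ⟨ℓ, ⟨hℓ, hc, hx⟩, -⟩ := hclass i x
      exact ⟨ℓ, Finset.mem_filter.mpr ⟨hℓ, hx⟩, hc⟩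
  have hle1 : ∀ x y : X, x ≠ y → n x y ≤ 1 := by
    intro x y hxy
    refine Finset.card_le_one.mpr fun m hm m' hm' => ?_
    rw [Finset.mem_filter] at hm hm'
    by_cases hcc : c m = c m'
    · exact huniq m hm.1 m' hm'.1 hcc x hm.2.1 hm'.2.1
    · exfalso
      have h2 : 1 < (m ∩ m').card := Finset.one_lt_card.mpr
        ⟨x, Finset.mem_inter.mpr ⟨hm.2.1, hm'.2.1⟩, y,
          Finset.mem_inter.mpr ⟨hm.2.2, hm'.2.2⟩, hxy⟩
      rw [hmeet m hm.1 m' hm'.1 hcc] at h2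
      exact lt_irrefl 1 h2
  have hoffsum : ∑ x ∈ S, ∑ y ∈ S.erase x, n x y = ∑ x ∈ S, ∑ y ∈ S.erase x, 1 := by
    have htot : (∑ x ∈ S, ∑ y ∈ S, n x y) + d = d^2 + k*d := by
      rw [← hdouble]; exact hsqN
    have hsplit : ∀ x ∈ S, ∑ y ∈ S, n x y = k + ∑ y ∈ S.erase x, n x y := by
      intro x hx
      rw [← Finset.add_sum_erase S (n x) hx, hdiag x]
    rw [Finset.sum_congr rfl hsplit, Finset.sum_add_distrib, Finset.sum_const, hS,
      smul_eq_mul] at htot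
    have hrhs : ∑ x ∈ S, ∑ y ∈ S.erase x, (1:ℕ) = d * (d-1) := by
      rw [Finset.sum_congr rfl (fun x hx => by
        rw [Finset.sum_const, smul_eq_mul, mul_one, Finset.card_erase_of_mem hx, hS] :
        ∀ x ∈ S, ∑ y ∈ S.erase x, (1:ℕ) = d - 1), Finset.sum_const, hS, smul_eq_mul]
    rw [hrhs]
    -- htot : d * k + ∑∑ + d = d^2 + k*d
    obtain ⟨e, rfl⟩ : ∃ e, d = e + 1 := ⟨d - 1, by omega⟩
    have h2 : (e+1)^2 = (e+1)*e + (e+1) := by ring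
    have h3 : (e+1)*k = k*(e+1) := mul_comm _ _
    have h4 : (e+1) * ((e+1) - 1) = (e+1)*e := by simp
    rw [h2, h4] at *
    linarith [htot]
  have hcoll : ∀ x ∈ S, ∀ y ∈ S.erase x, n x y = 1 := by
    intro x hx y hy
    have houter := (Finset.sum_eq_sum_iff_of_le (fun x hx => Finset.sum_le_sum
      (fun y hy => hle1 x y (fun h => (Finset.mem_erase.mp hy).1 h.symm)))).mp hoffsum x hx
    exact (Finset.sum_eq_sum_iff_of_le
      (fun y hy => hle1 x y (fun h => (Finset.mem_erase.mp hy).1 h.symm))).mp houter y hy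
  have hcol : ∀ x ∈ S, ∀ y ∈ S, x ≠ y → ∃ m ∈ L, x ∈ m ∧ y ∈ m := by
    intro x hx y hy hxy
    have h1 : n x y = 1 := hcoll x hx y (Finset.mem_erase.mpr ⟨hxy.symm, hy⟩)
    have h2 : 0 < (L.filter (fun m => x ∈ m ∧ y ∈ m)).card := by
      show 0 < n x y
      omega
    obtain ⟨m, hm⟩ := Finset.card_pos.mp h2
    rw [Finset.mem_filter] at hm
    exact ⟨m, hm.1, hm.2.1, hm.2.2⟩
  -- pick a point of S and find a big line through it
  have hSne : S.Nonempty := Finset.card_pos.mp (by omega)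
  obtain ⟨x₀, hx₀⟩ := hSne
  choose el hel1 hel2 hel3 using fun i : Fin k => (hclass i x₀).exists
  have hcover : S.erase x₀ ⊆ Finset.univ.biUnion (fun i => (S ∩ el i).erase x₀) := by
    intro y hy
    rw [Finset.mem_erase] at hy
    obtain ⟨m, hm, hx₀m, hym⟩ := hcol x₀ hx₀ y hy.2 (Ne.symm hy.1)
    have hmel : m = el (c m) :=
      huniq m hm (el (c m)) (hel1 _) (hel2 _).symm x₀ hx₀m (hel3 _)
    exact Finset.mem_biUnion.mpr ⟨c m, Finset.mem_univ _, Finset.mem_erase.mpr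
      ⟨hy.1, Finset.mem_inter.mpr ⟨hy.2, hmel ▸ hym⟩⟩⟩
  have hsum_e : (d - 1 : ℕ) ≤ ∑ i : Fin k, ((S ∩ el i).erase x₀).card := by
    calc (d - 1 : ℕ) = (S.erase x₀).card := by rw [Finset.card_erase_of_mem hx₀, hS]
      _ ≤ _ := le_trans (Finset.card_le_card hcover) (Finset.card_biUnion_le)
  have hbig : ∃ i : Fin k, k ≤ (S ∩ el i).card := by
    by_contra hcon
    push_neg at hcon
    have he : ∀ i : Fin k, ((S ∩ el i).erase x₀).card + 2 ≤ k := by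
      intro i
      have h1 : x₀ ∈ S ∩ el i := Finset.mem_inter.mpr ⟨hx₀, hel3 i⟩
      have h2 := Finset.card_erase_of_mem h1
      have h3 := hcon i
      have h4 : 0 < (S ∩ el i).card := Finset.card_pos.mpr ⟨x₀, h1⟩
      omega
    have hsum2 : ∑ i : Fin k, (((S ∩ el i).erase x₀).card + 2) ≤ ∑ _i : Fin k, k :=
      Finset.sum_le_sum (fun i _ => he i)
    rw [Finset.sum_add_distrib, Finset.sum_const, Finset.sum_const, Finset.card_univ,
      Fintype.card_fin, smul_eq_mul, smul_eq_mul] at hsum2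
    have hd2 : d ≤ (∑ i : Fin k, ((S ∩ el i).erase x₀).card) + 1 := by omega
    linarith [hkk, hk1]
  obtain ⟨i, hibig⟩ := hbig
  have hsub : S ⊆ el i := by
    intro y hy
    by_contra hyℓ
    have hmapsto : ∀ z ∈ S ∩ el i, ∃ m ∈ L, y ∈ m ∧ z ∈ m := by
      intro z hz
      rw [Finset.mem_inter] at hz
      exact hcol y hy z hz.1 (fun h => hyℓ (h ▸ hz.2))
    set F : X → Finset X := fun z => if h : ∃ m ∈ L, y ∈ m ∧ z ∈ m then h.choose else ∅ with hF
    have hFspec : ∀ z ∈ S ∩ el i, F z ∈ L ∧ y ∈ F z ∧ z ∈ F z := by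
      intro z hz
      have h := hmapsto z hz
      rw [hF]
      simp only [dif_pos h]
      exact h.choose_spec
    have hFclass : ∀ z ∈ S ∩ el i, c (F z) ≠ c (el i) := by
      intro z hz hcc
      obtain ⟨h1, h2, h3⟩ := hFspec z hz
      have := huniq (F z) h1 (el i) (hel1 i) hcc z h3 (Finset.mem_inter.mp hz).2
      exact hyℓ (this ▸ h2)
    have hcard1 : (S ∩ el i).card ≤ (L.filter (fun m => y ∈ m ∧ c m ≠ c (el i))).card := by
      apply Finset.card_le_card_of_injOn F
      · intro z hz
        obtain ⟨h1, h2, h3⟩ := hFspec z hz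
        exact Finset.mem_filter.mpr ⟨h1, h2, hFclass z hz⟩

      · intro z hz z' hz' hFe
        rw [Finset.mem_coe] at hz hz'
        obtain ⟨h1, h2, h3⟩ := hFspec z hz
        obtain ⟨h1', h2', h3'⟩ := hFspec z' hz'
        have hcardi := hmeet (F z) h1 (el i) (hel1 i) (hFclass z hz)
        have hz1 : z ∈ F z ∩ el i :=
          Finset.mem_inter.mpr ⟨h3, (Finset.mem_inter.mp hz).2⟩
        have hz2 : z' ∈ F z ∩ el i :=
          Finset.mem_inter.mpr ⟨hFe ▸ h3', (Finset.mem_inter.mp hz').2⟩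
        exact Finset.card_le_one.mp (le_of_eq hcardi) z hz1 z' hz2
    have hcard2 : (L.filter (fun m => y ∈ m ∧ c m ≠ c (el i))).card ≤ k - 1 := by
      have h1 : (L.filter (fun m => y ∈ m ∧ c m ≠ c (el i))).card
          ≤ (Finset.univ.erase (c (el i))).card := by
        apply Finset.card_le_card_of_injOn c
        · intro m hm
          rw [Finset.mem_coe, Finset.mem_filter] at hm
          exact Finset.mem_erase.mpr ⟨hm.2.2, Finset.mem_univ _⟩
        · intro m hm m' hm' hcc
          rw [Finset.mem_coe, Finset.mem_filter] at hm hm'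
          exact huniq m hm.1 m' hm'.1 hcc y hm.2.1 hm'.2.1
      rwa [Finset.card_erase_of_mem (Finset.mem_univ _), Finset.card_univ,
        Fintype.card_fin] at h1
    omega
  have hfin : S = el i :=
    Finset.eq_of_subset_of_card_le hsub (by rw [hS, hsize (el i) (hel1 i)])
  rw [hfin]
  exact hel1 i
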